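/- Dyadic cube decomposition of a well shaped set, cardinality bound: let m ≥ 1, let Ω ⊆ 𝕋_m be well shaped with constant C, and fix γ ∈ 𝕋_m. For a positive integer k let C(k) be the set of cubes of the form ∏_{j=1}^m [γ_j + u_j/k, γ_j + (u_j+1)/k] (taken modulo 1, u ∈ ℤ^m) that are contained in Ω. Define B_1 = C(2) and, for i ≥ 2, let B_i be the set of cubes in C(2^i) not contained in any cube of C(2^{i−1}). Then #B_i ≤ c · 2^{i(m−1)} for all i ≥ 1, where c depends only on m and C. -/

import Mathlib

open MeasureTheory

noncomputable section

abbrev Torus (m : ℕ) : Type := Fin m → AddCircle (1 : ℝ)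

noncomputable def tmeas {m : ℕ} (Ω : Set (Torus m)) : ℝ := (volume Ω).toReal

noncomputable def torusDist {m : ℕ} (u w : Torus m) : ℝ :=
  Real.sqrt (∑ i, dist (u i) (w i) ^ 2)

noncomputable def torusDistSet {m : ℕ} (u : Torus m) (Ω : Set (Torus m)) : ℝ :=
  ⨅ w : Ω, torusDist u (w : Torus m)

def outerShell {m : ℕ} (Ω : Set (Torus m)) (ε : ℝ) : Set (Torus m) :=
  {u | u ∉ Ω ∧ torusDistSet u Ω < ε}

def innerShell {m : ℕ} (Ω : Set (Torus m)) (ε : ℝ) : Set (Torus m) :=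
  {u | u ∈ Ω ∧ torusDistSet u Ωᶜ < ε}

def IsWellShaped {m : ℕ} (Ω : Set (Torus m)) (C : ℝ) : Prop :=
  ∀ ε : ℝ, 0 < ε →
    tmeas (outerShell Ω ε) ≤ C * ε ∧ tmeas (innerShell Ω ε) ≤ C * ε

def IsVeryWellShaped {m : ℕ} (Ω : Set (Torus m)) (C : ℝ) : Prop :=
  ∀ ε : ℝ, 0 < ε →
    tmeas (outerShell Ω ε) ≤ C * (tmeas Ω ^ (1 - 1 / (m : ℝ)) * ε + ε ^ m) ∧
    tmeas (innerShell Ω ε) ≤ C * (tmeas Ω ^ (1 - 1 / (m : ℝ)) * ε + ε ^ m)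

noncomputable def discrepancy {ι : Type*} {n : ℕ} (s : Set ι) (ξ : ι → Fin n → ℝ) : ℝ :=
  if s.ncard = 0 then 1
  else
    ⨆ B : {B : (Fin n → ℝ) × (Fin n → ℝ) // ∀ j, 0 ≤ B.1 j ∧ B.1 j ≤ B.2 j ∧ B.2 j ≤ 1},
      |((s ∩ {k | ∀ j, B.val.1 j ≤ ξ k j ∧ ξ k j < B.val.2 j}).ncard : ℝ) / (s.ncard : ℝ)
        - ∏ j, (B.val.2 j - B.val.1 j)|

noncomputable def torusPt (p : ℕ) {m : ℕ} (x : Fin m → Fin p) : Torus m :=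
  fun i => ((((x i : ℕ) : ℝ) / (p : ℝ) : ℝ) : AddCircle (1 : ℝ))

noncomputable def fracPt {p m n : ℕ} (G : Fin n → MvPolynomial (Fin m) (ZMod p))
    (x : Fin m → ℤ) : Fin n → ℝ :=
  fun j => ((MvPolynomial.eval (fun i => ((x i : ℤ) : ZMod p)) (G j)).val : ℝ) / (p : ℝ)

def Degree2Independent {p m n : ℕ} (G : Fin n → MvPolynomial (Fin m) (ZMod p)) : Prop :=
  ∀ a : Fin n → ZMod p, a ≠ 0 → 2 ≤ (∑ j, a j • G j).totalDegree

def torusIcc (a b : ℝ) : Set (AddCircle (1 : ℝ)) :=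
  (fun r : ℝ => (r : AddCircle (1 : ℝ))) '' Set.Icc a b

def gridCube {m : ℕ} (γ : Fin m → ℝ) (k : ℕ) (u : Fin m → ℤ) : Set (Torus m) :=
  {t | ∀ i, t i ∈ torusIcc (γ i + (u i : ℝ) / k) (γ i + ((u i : ℝ) + 1) / k)}

def torusCube {m : ℕ} (γ : Fin m → ℝ) (s : ℝ) : Set (Torus m) :=
  {t | ∀ i, t i ∈ torusIcc (γ i) (γ i + s)}

def cubesIn {m : ℕ} (Ω : Set (Torus m)) (γ : Fin m → ℝ) (k : ℕ) : Set (Set (Torus m)) :=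
  {Γ | (∃ u : Fin m → ℤ, Γ = gridCube γ k u) ∧ Γ ⊆ Ω}

def dyadicB {m : ℕ} (Ω : Set (Torus m)) (γ : Fin m → ℝ) (i : ℕ) : Set (Set (Torus m)) :=
  if i = 1 then cubesIn Ω γ 2
  else {Γ | Γ ∈ cubesIn Ω γ (2 ^ i) ∧ ∀ Γ' ∈ cubesIn Ω γ (2 ^ (i - 1)), ¬ Γ ⊆ Γ'}

def polySolutions (p : ℕ) {m n : ℕ} (F : Fin n → MvPolynomial (Fin m) ℤ) :
    Set (Fin m → Fin p) :=
  {x | ∀ j, ((MvPolynomial.eval (fun i => ((x i : ℕ) : ℤ)) (F j) : ℤ) : ZMod p) = 0}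

noncomputable def Tcount (p : ℕ) {m n : ℕ} (F : Fin n → MvPolynomial (Fin m) ℤ)
    (S : Set (Torus m)) : ℕ :=
  (polySolutions p F ∩ {x | torusPt p x ∈ S}).ncard

end

section Aux0
open Set MeasureTheory

lemma coeAC_eq_iff (x y : ℝ) : ((x:AddCircle (1:ℝ)) = (y:AddCircle (1:ℝ))) ↔ ∃ n : ℤ, x - y = n := by
  constructor
  · intro h
    have := QuotientAddGroup.eq_iff_sub_mem.mp h.symm
    rw [AddSubgroup.mem_zmultiples_iff] at this
    obtain ⟨n, hn⟩ := this
    exact ⟨-n, by push_cast; simp only [zsmul_eq_mul, mul_one] at hn; linarith⟩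
  · rintro ⟨n, hn⟩
    have hx : x = y + (n:ℝ) := by linarith
    rw [hx]
    symm
    apply (QuotientAddGroup.eq_iff_sub_mem).mpr
    rw [AddSubgroup.mem_zmultiples_iff]
    exact ⟨-n, by simp [zsmul_eq_mul]⟩

lemma coeAC_add_int (x : ℝ) (n : ℤ) : ((x + n : ℝ) : AddCircle (1:ℝ)) = x :=
  (coeAC_eq_iff (x + n) x).mpr ⟨n, by ring⟩

lemma distAC_le (x y : ℝ) : dist (x : AddCircle (1:ℝ)) (y : AddCircle (1:ℝ)) ≤ |x - y| := by
  rw [dist_eq_norm, ← AddCircle.coe_sub]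
  exact (QuotientAddGroup.norm_mk_le_norm (m := x - y)).trans_eq (Real.norm_eq_abs _)

lemma volAC_singleton (x : AddCircle (1:ℝ)) : volume {x} = 0 := by
  have h : ({x} : Set (AddCircle (1:ℝ))) ⊆ Metric.closedBall x 0 :=
    fun y hy => by simp_all
  have h2 := measure_mono (μ := (volume : Measure (AddCircle (1:ℝ)))) h
  rw [AddCircle.volume_closedBall] at h2
  simpa using h2

end Aux0
section Aux
open Set MeasureTheory

lemma torusIcc_shift (a b : ℝ) (n : ℤ) : torusIcc (a + n) (b + n) = torusIcc a b := by
  unfold torusIcc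
  have h : Icc (a + (n:ℝ)) (b + n) = (fun x : ℝ => x + n) '' Icc a b := by
    rw [Set.image_add_const_Icc]
  rw [h, ← Set.image_comp]
  apply Set.image_congr
  intro x _
  exact coeAC_add_int x n

lemma torusIcc_mono {a b a' b' : ℝ} (h : Icc a b ⊆ Icc a' b') : torusIcc a b ⊆ torusIcc a' b' :=
  Set.image_mono h

lemma isClosed_torusIcc (a b : ℝ) : IsClosed (torusIcc a b) :=
  (isCompact_Icc.image (AddCircle.continuous_mk' 1)).isClosed

lemma dist_torusIcc {a b : ℝ} (hab : a ≤ b) {x y : AddCircle (1:ℝ)}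
    (hx : x ∈ torusIcc a b) (hy : y ∈ torusIcc a b) : dist x y ≤ b - a := by
  obtain ⟨x', hx', rfl⟩ := hx
  obtain ⟨y', hy', rfl⟩ := hy
  refine (distAC_le x' y').trans ?_
  rw [abs_sub_le_iff]
  constructor <;> [linarith [hx'.2, hy'.1]; linarith [hy'.2, hx'.1]]

lemma volume_torusIcc_ge {ℓ : ℝ} (h0 : 0 < ℓ) (h1 : ℓ ≤ 1) (a : ℝ) :
    ENNReal.ofReal ℓ ≤ volume (torusIcc a (a + ℓ)) := by
  have hmeas : MeasurableSet (torusIcc a (a + ℓ)) := (isClosed_torusIcc _ _).measurableSet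
  rw [AddCircle.add_projection_respects_measure (1:ℝ) a hmeas]
  have hsub : Ioc a (a + ℓ) ⊆ (QuotientAddGroup.mk ⁻¹' torusIcc a (a + ℓ)) ∩ Ioc a (a + 1) := by
    intro x hx
    refine ⟨⟨x, Ioc_subset_Icc_self hx, rfl⟩, hx.1, hx.2.trans (by linarith)⟩
  calc ENNReal.ofReal ℓ = volume (Ioc a (a + ℓ)) := by rw [Real.volume_Ioc]; ring_nf
    _ ≤ _ := measure_mono hsub
section Aux2
open Set MeasureTheory

lemma arc_inter_subset {k : ℕ} (hk : 1 ≤ k) {j : ℤ} (hj1 : 1 ≤ j) (hj2 : j ≤ (k:ℤ) - 1) (a : ℝ) :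
    torusIcc a (a + 1/k) ∩ torusIcc (a + j/k) (a + j/k + 1/k) ⊆
      {((a : ℝ) : AddCircle (1:ℝ)), ((a + 1/k : ℝ) : AddCircle (1:ℝ))} := by
  have hkpos : (0:ℝ) < k := by exact_mod_cast hk
  set ℓ : ℝ := 1/k with hℓ
  have hℓpos : 0 < ℓ := by positivity
  have hjk : (j:ℝ) ≤ (k:ℝ) - 1 := by exact_mod_cast hj2
  have hj1' : (1:ℝ) ≤ (j:ℝ) := by exact_mod_cast hj1
  rintro z ⟨⟨x, hx, rfl⟩, ⟨y, hy, hxy⟩⟩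
  obtain ⟨n, hn⟩ := (coeAC_eq_iff x y).mp hxy.symm
  have hjl : (j:ℝ)/k = j*ℓ := by rw [hℓ]; ring
  have hkl : (k:ℝ)*ℓ = 1 := by rw [hℓ, mul_one_div, div_self hkpos.ne']
  have hx1 : a ≤ x := hx.1
  have hx2 : x ≤ a + ℓ := hx.2
  have hy1 : a + j*ℓ ≤ y := by rw [← hjl]; exact hy.1
  have hy2 : y ≤ a + j*ℓ + ℓ := by rw [← hjl]; exact hy.2
  have hn1 : (-1 : ℝ) ≤ (n:ℝ) := by
    rw [← hn]
    have : (j:ℝ)*ℓ + ℓ ≤ 1 := by nlinarith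
    linarith
  have hn2 : (n:ℝ) ≤ 0 := by
    rw [← hn]
    nlinarith
  have : n = 0 ∨ n = -1 := by
    have h1 : (-1:ℤ) ≤ n := by exact_mod_cast hn1
    have h2 : n ≤ 0 := by exact_mod_cast hn2
    omega
  rcases this with rfl | rfl
  · -- x = y, so x = a + ℓ
    have hxeq : x = a + ℓ := by
      have hxy' : x = y := by push_cast at hn; linarith
      have : (1:ℝ)*ℓ ≤ j*ℓ := by nlinarith
      nlinarith
    right; rw [hxeq]; rfl
  · -- y = x + 1, so x = a
    have hxeq : x = a := by
      have hxy' : y = x + 1 := by push_cast at hn; linarith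
      have : (j:ℝ)*ℓ + ℓ ≤ k*ℓ := by nlinarith
      nlinarith
    left; rw [hxeq]

lemma vol_pair_zero (p q : AddCircle (1:ℝ)) : volume ({p, q} : Set (AddCircle (1:ℝ))) = 0 := by
  refine le_antisymm ?_ zero_le
  calc volume ({p, q} : Set (AddCircle (1:ℝ))) ≤ volume ({p} : Set _) + volume {q} :=
        measure_union_le _ _
    _ = 0 := by rw [volAC_singleton, volAC_singleton, add_zero]

lemma vol_eval_preimage_zero {m : ℕ} (i₀ : Fin m) {F : Set (AddCircle (1:ℝ))}
    (hF : MeasurableSet F) (h0 : volume F = 0) :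
    volume {t : Torus m | t i₀ ∈ F} = 0 := by
  classical
  have he : {t : Torus m | t i₀ ∈ F} = Set.pi univ (Function.update (fun _ => univ) i₀ F) := by
    rw [← Set.eval_preimage]; rfl
  rw [he, volume_pi_pi]
  apply Finset.prod_eq_zero (Finset.mem_univ i₀)
  simp [h0]
end Aux2
section Aux3
open Set MeasureTheory

lemma gridCube_eq_pi {m : ℕ} (γ : Fin m → ℝ) (k : ℕ) (u : Fin m → ℤ) :
    gridCube γ k u =
      Set.pi univ (fun i => torusIcc (γ i + (u i : ℝ)/k) (γ i + (u i : ℝ)/k + 1/k)) := by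
  unfold gridCube
  ext t
  simp only [Set.mem_setOf_eq, Set.mem_pi, Set.mem_univ, forall_true_left]
  have h : ∀ i : Fin m, γ i + ((u i : ℝ) + 1)/k = γ i + (u i : ℝ)/k + 1/k := by
    intro i; ring
  constructor <;> intro ht i <;> [rw [← h i]; rw [h i]] <;> exact ht i

lemma measurableSet_gridCube {m : ℕ} (γ : Fin m → ℝ) (k : ℕ) (u : Fin m → ℤ) :
    MeasurableSet (gridCube γ k u) := by
  rw [gridCube_eq_pi]
  exact MeasurableSet.univ_pi fun i => (isClosed_torusIcc _ _).measurableSet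

lemma volume_gridCube_ge {m : ℕ} (γ : Fin m → ℝ) {k : ℕ} (hk : 1 ≤ k) (u : Fin m → ℤ) :
    ENNReal.ofReal ((1/(k:ℝ))^m) ≤ volume (gridCube γ k u) := by
  have hkpos : (0:ℝ) < k := by exact_mod_cast hk
  rw [gridCube_eq_pi, volume_pi_pi]
  calc ENNReal.ofReal ((1/(k:ℝ))^m) = ∏ _i : Fin m, ENNReal.ofReal (1/(k:ℝ)) := by
        rw [Finset.prod_const, ← ENNReal.ofReal_pow (by positivity)]
        simp
    _ ≤ _ := Finset.prod_le_prod' fun i _ =>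
        volume_torusIcc_ge (by positivity) (by
          rw [div_le_one hkpos]; exact_mod_cast hk) (γ i + (u i : ℝ)/k)

lemma gridCube_mod {m : ℕ} (γ : Fin m → ℝ) {k : ℕ} (hk : 1 ≤ k) (u u' : Fin m → ℤ)
    (h : ∀ i, (k:ℤ) ∣ (u i - u' i)) : gridCube γ k u = gridCube γ k u' := by
  have hkpos : (0:ℝ) < k := by exact_mod_cast hk
  unfold gridCube
  ext t
  simp only [Set.mem_setOf_eq]
  have key : ∀ i, torusIcc (γ i + (u i : ℝ)/k) (γ i + ((u i : ℝ) + 1)/k)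
      = torusIcc (γ i + (u' i : ℝ)/k) (γ i + ((u' i : ℝ) + 1)/k) := by
    intro i
    obtain ⟨n, hn⟩ := h i
    have hu : (u i : ℝ) = (u' i : ℝ) + (n:ℝ) * k := by
      have : (u i : ℤ) = u' i + k * n := by linarith [hn]
      push_cast [this]; ring
    have h1 : γ i + (u i : ℝ)/k = (γ i + (u' i : ℝ)/k) + (n:ℤ) := by
      rw [hu]; field_simp; ring
    have h2 : γ i + ((u i : ℝ) + 1)/k = (γ i + ((u' i : ℝ) + 1)/k) + (n:ℤ) := by
      rw [hu]; field_simp; ring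
    rw [h1, h2, torusIcc_shift]
  constructor <;> intro ht i <;> [rw [← key i]; rw [key i]] <;> exact ht i

lemma gridCube_inter_null {m : ℕ} (γ : Fin m → ℝ) {k : ℕ} (hk : 1 ≤ k) (u u' : Fin m → ℤ)
    (i₀ : Fin m) (hd : ¬ ((k:ℤ) ∣ (u i₀ - u' i₀))) :
    volume (gridCube γ k u ∩ gridCube γ k u') = 0 := by
  have hkpos : (0:ℝ) < k := by exact_mod_cast hk
  -- replace u' i₀ by u i₀ + j with 1 ≤ j ≤ k-1 modulo k
  set j : ℤ := (u' i₀ - u i₀) % k with hj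
  have hk' : (1:ℤ) ≤ (k:ℤ) := by exact_mod_cast hk
  have hj0 : 0 ≤ j := Int.emod_nonneg _ (by omega)
  have hjlt : j < k := Int.emod_lt_of_pos _ (by exact_mod_cast hk)
  have hj1 : 1 ≤ j := by
    rcases hj0.lt_or_eq with h | h
    · omega
    · exfalso; apply hd
      have : (k:ℤ) ∣ (u' i₀ - u i₀) := Int.dvd_of_emod_eq_zero h.symm
      exact dvd_sub_comm.mp this
  -- the cube gridCube γ k u' agrees with gridCube γ k (u + j at i₀ effectively) on coordinate i₀ arcs
  have hdvd : (k:ℤ) ∣ (u' i₀ - (u i₀ + j)) := by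
    rw [hj]
    have := Int.emod_add_mul_ediv (u' i₀ - u i₀) k
    exact ⟨(u' i₀ - u i₀) / k, by linarith⟩
  -- coordinate i₀ arcs
  set a : ℝ := γ i₀ + (u i₀ : ℝ)/k with ha
  have harc' : torusIcc (γ i₀ + (u' i₀ : ℝ)/k) (γ i₀ + ((u' i₀ : ℝ) + 1)/k)
      = torusIcc (a + (j:ℝ)/k) (a + (j:ℝ)/k + 1/k) := by
    obtain ⟨n, hn⟩ := hdvd
    have hu : (u' i₀ : ℝ) = (u i₀ : ℝ) + (j:ℝ) + (n:ℝ) * k := by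
      have : (u' i₀ : ℤ) = u i₀ + j + k * n := by linarith [hn]
      push_cast [this]; ring
    have h1 : γ i₀ + (u' i₀ : ℝ)/k = (a + (j:ℝ)/k) + (n:ℤ) := by
      rw [hu, ha]; field_simp; ring
    have h2 : γ i₀ + ((u' i₀ : ℝ) + 1)/k = (a + (j:ℝ)/k + 1/k) + (n:ℤ) := by
      rw [hu, ha]; field_simp; ring
    rw [h1, h2, torusIcc_shift]
  have hsub : gridCube γ k u ∩ gridCube γ k u' ⊆
      {t : Torus m | t i₀ ∈ ({((a : ℝ) : AddCircle (1:ℝ)), ((a + 1/k : ℝ) : AddCircle (1:ℝ))} : Set _)} := by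
    rintro t ⟨h1, h2⟩
    have hx : t i₀ ∈ torusIcc a (a + 1/k) := by
      have := h1 i₀
      rw [show γ i₀ + ((u i₀ : ℝ) + 1)/k = a + 1/k by rw [ha]; ring,
        show γ i₀ + (u i₀ : ℝ)/k = a from ha.symm] at this
      exact this
    have hy : t i₀ ∈ torusIcc (a + (j:ℝ)/k) (a + (j:ℝ)/k + 1/k) := by
      rw [← harc']; exact h2 i₀
    exact arc_inter_subset hk hj1 (by omega) a ⟨hx, hy⟩
  refine le_antisymm ?_ zero_le
  calc volume (gridCube γ k u ∩ gridCube γ k u') ≤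
      volume {t : Torus m | t i₀ ∈ ({((a : ℝ) : AddCircle (1:ℝ)), ((a + 1/k : ℝ) : AddCircle (1:ℝ))} : Set _)} :=
        measure_mono hsub
    _ = 0 := vol_eval_preimage_zero i₀ (by measurability) (vol_pair_zero _ _)

end Aux3
section Aux4
open Set MeasureTheory

lemma cubes_subset_range {m : ℕ} (γ : Fin m → ℝ) {k : ℕ} (hk : 1 ≤ k) :
    {Γ : Set (Torus m) | ∃ u : Fin m → ℤ, Γ = gridCube γ k u} ⊆
      Set.range (fun v : Fin m → Fin k => gridCube γ k (fun i => ((v i : ℕ) : ℤ))) := by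
  rintro Γ ⟨u, rfl⟩
  have hk' : (0:ℤ) < k := by exact_mod_cast hk
  refine ⟨fun i => ⟨(u i % k).toNat, ?_⟩, ?_⟩
  · have h1 : 0 ≤ u i % k := Int.emod_nonneg _ hk'.ne'
    have h2 : u i % k < k := Int.emod_lt_of_pos _ hk'
    omega
  · refine gridCube_mod γ hk _ u fun i => ?_
    have h1 : 0 ≤ u i % k := Int.emod_nonneg _ hk'.ne'
    simp only [Int.toNat_of_nonneg h1]
    have := Int.emod_add_mul_ediv (u i) k
    exact ⟨- (u i / k), by linarith⟩

lemma cubesIn_finite {m : ℕ} (Ω : Set (Torus m)) (γ : Fin m → ℝ) {k : ℕ} (hk : 1 ≤ k) :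
    (cubesIn Ω γ k).Finite ∧ (cubesIn Ω γ k).ncard ≤ k ^ m := by
  have hsub : cubesIn Ω γ k ⊆
      Set.range (fun v : Fin m → Fin k => gridCube γ k (fun i => ((v i : ℕ) : ℤ))) :=
    fun Γ hΓ => cubes_subset_range γ hk hΓ.1
  have hfin : (Set.range (fun v : Fin m → Fin k => gridCube γ k (fun i => ((v i : ℕ) : ℤ)))).Finite :=
    Set.finite_range _
  refine ⟨hfin.subset hsub, ?_⟩
  calc (cubesIn Ω γ k).ncard ≤ _ := Set.ncard_le_ncard hsub hfin
    _ ≤ (Set.univ : Set (Fin m → Fin k)).ncard := by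
        rw [← Set.image_univ]; exact Set.ncard_image_le Set.finite_univ
    _ = k ^ m := by rw [Set.ncard_univ, Nat.card_eq_fintype_card]; simp

lemma gridCube_subset_parent {m : ℕ} (γ : Fin m → ℝ) {i : ℕ} (hi : 1 ≤ i) (u : Fin m → ℤ) :
    gridCube γ (2 ^ i) u ⊆ gridCube γ (2 ^ (i - 1)) (fun x => u x / 2) := by
  intro t ht x
  have hkey : (2:ℕ) ^ i = 2 * 2 ^ (i - 1) := by
    conv_lhs => rw [show i = 1 + (i - 1) by omega]
    rw [pow_add, pow_one]
  have hpos : (0:ℝ) < (2:ℝ) ^ (i - 1) := by positivity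
  have hpos' : (0:ℝ) < ((2:ℕ) ^ i : ℝ) := by positivity
  have hcast : ((2:ℕ) ^ i : ℝ) = 2 * ((2:ℕ) ^ (i-1) : ℝ) := by exact_mod_cast congrArg (Nat.cast : ℕ → ℝ) hkey
  set v : ℤ := u x / 2 with hv
  have hdiv : 2 * v ≤ u x ∧ u x ≤ 2 * v + 1 := by
    have h := Int.emod_add_mul_ediv (u x) 2
    have h1 : 0 ≤ u x % 2 := Int.emod_nonneg _ (by norm_num)
    have h2 : u x % 2 < 2 := Int.emod_lt_of_pos _ (by norm_num)
    omega
  refine torusIcc_mono (Set.Icc_subset_Icc ?_ ?_) (ht x) <;> push_cast <;>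
    [skip; skip]
  all_goals {
    have h2i : (2:ℝ)^i = 2^(i-1) * 2 := by
      rw [← pow_succ]; congr 1; omega
    have hd1 : (2:ℝ) * v ≤ (u x : ℝ) := by exact_mod_cast hdiv.1
    have hd2 : (u x : ℝ) ≤ 2 * v + 1 := by exact_mod_cast hdiv.2
    rw [add_le_add_iff_left, div_le_div_iff₀ (by positivity) (by positivity), h2i] <;> nlinarith [hpos]
  }

lemma torusDist_le {m : ℕ} {t b : Torus m} {ℓ : ℝ} (hℓ : 0 ≤ ℓ)
    (h : ∀ x, dist (t x) (b x) ≤ ℓ) : torusDist t b ≤ Real.sqrt m * ℓ := by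
  unfold torusDist
  have h1 : (∑ x, dist (t x) (b x) ^ 2) ≤ (m:ℝ) * ℓ^2 := by
    calc (∑ x, dist (t x) (b x) ^ 2) ≤ ∑ _x : Fin m, ℓ^2 :=
          Finset.sum_le_sum fun x _ => by
            have := h x; nlinarith [dist_nonneg (x := t x) (y := b x)]
      _ = (m:ℝ) * ℓ^2 := by rw [Finset.sum_const]; simp [nsmul_eq_mul]
  calc Real.sqrt (∑ x, dist (t x) (b x) ^ 2) ≤ Real.sqrt ((m:ℝ) * ℓ^2) := Real.sqrt_le_sqrt h1
    _ = Real.sqrt m * ℓ := by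
        rw [Real.sqrt_mul (Nat.cast_nonneg m), Real.sqrt_sq hℓ]

lemma torusDistSet_le {m : ℕ} (t : Torus m) {Ω : Set (Torus m)} {b : Torus m} (hb : b ∈ Ω) :
    torusDistSet t Ω ≤ torusDist t b := by
  unfold torusDistSet
  refine ciInf_le ⟨0, ?_⟩ (⟨b, hb⟩ : Ω)
  rintro r ⟨w, rfl⟩
  exact Real.sqrt_nonneg _
end Aux4
section Main
open Set MeasureTheory
open scoped ENNReal

/-- Dyadic cube decomposition of a well shaped set: `#B_i ≤ c 2^{i(m−1)}` with `c = c(m,C)`. -/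
theorem dyadicB_card_well_shaped (m : ℕ) (hm : 1 ≤ m) (C : ℝ) :
    ∃ c : ℝ, 0 < c ∧
      ∀ Ω : Set (Torus m), IsWellShaped Ω C → ∀ γ : Fin m → ℝ, ∀ i : ℕ, 1 ≤ i →
        ((dyadicB Ω γ i).ncard : ℝ) ≤ c * 2 ^ (i * (m - 1)) := by
  classical
  obtain ⟨n, rfl⟩ : ∃ n, m = n + 1 := ⟨m - 1, by omega⟩
  set m := n + 1
  have hsqm : (0:ℝ) < Real.sqrt m := Real.sqrt_pos.mpr (by positivity)
  refine ⟨2 ^ m + 4 * Real.sqrt m * max C 1, by positivity, ?_⟩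
  intro Ω hWS γ i hi
  have hmax0 : (0:ℝ) ≤ max C 1 := le_trans zero_le_one (le_max_right _ _)
  have hpow1 : (1:ℝ) ≤ 2 ^ (i * (m - 1)) := one_le_pow₀ (by norm_num)
  by_cases hi1 : i = 1
  · -- case i = 1 : crude counting bound
    subst hi1
    rw [dyadicB, if_pos rfl]
    have h := (cubesIn_finite Ω γ (k := 2) (by norm_num)).2
    calc ((cubesIn Ω γ 2).ncard : ℝ) ≤ (2:ℝ) ^ m := by exact_mod_cast h
      _ ≤ (2 ^ m + 4 * Real.sqrt m * max C 1) * 1 := by nlinarith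
      _ ≤ _ := by
          apply mul_le_mul_of_nonneg_left hpow1 (by positivity)
  · -- case i ≥ 2
    have hi2 : 2 ≤ i := by omega
    rw [dyadicB, if_neg hi1]
    set k : ℕ := 2 ^ i with hkdef
    have hk1 : 1 ≤ k := Nat.one_le_two_pow
    set S : Set (Set (Torus m)) :=
      {Γ | Γ ∈ cubesIn Ω γ (2 ^ i) ∧ ∀ Γ' ∈ cubesIn Ω γ (2 ^ (i - 1)), ¬ Γ ⊆ Γ'} with hSdef
    have hfin : S.Finite :=
      ((cubesIn_finite Ω γ (k := 2 ^ i) hk1).1).subset fun Γ hΓ => hΓ.1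
    set F : Finset (Set (Torus m)) := hfin.toFinset with hF
    set K : ℝ := (2:ℝ) ^ i with hK
    have hKpos : (0:ℝ) < K := by positivity
    have hkK : ((k:ℕ) : ℝ) = K := by rw [hkdef, hK]; push_cast; ring
    set ℓ : ℝ := 1 / 2 ^ (i - 1) with hℓ
    have hℓpos : 0 < ℓ := by positivity
    set ε : ℝ := 4 * Real.sqrt m / K with hε
    have hεpos : 0 < ε := by positivity
    -- each cube of S lies in the inner shell
    have hshell : ∀ Γ ∈ S, Γ ⊆ innerShell Ω ε := by
      rintro Γ ⟨⟨⟨u, rfl⟩, hΓΩ⟩, hnot⟩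
      set P : Set (Torus m) := gridCube γ (2 ^ (i - 1)) (fun x => u x / 2) with hP
      have hΓP : gridCube γ (2 ^ i) u ⊆ P := gridCube_subset_parent γ (by omega) u
      have hPnot : ¬ P ⊆ Ω := by
        intro hPΩ
        exact hnot P ⟨⟨_, rfl⟩, hPΩ⟩ hΓP
      obtain ⟨b, hbP, hbΩ⟩ := not_subset.mp hPnot
      intro t ht
      refine ⟨hΓΩ ht, ?_⟩
      have hdist : ∀ x, dist (t x) (b x) ≤ ℓ := by
        intro x
        have ht' := hΓP ht x
        have hb' := hbP x
        simp only at ht' hb'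
        set D : ℝ := ((2 ^ (i-1) : ℕ) : ℝ) with hD
        have hDpos : (0:ℝ) < D := by rw [hD]; positivity
        have hab : γ x + ((u x / 2 : ℤ):ℝ) / D ≤ γ x + (((u x / 2 : ℤ):ℝ) + 1) / D := by
          have := (div_le_div_iff_of_pos_right hDpos).mpr
            (show ((u x / 2 : ℤ):ℝ) ≤ ((u x / 2 : ℤ):ℝ) + 1 by linarith)
          linarith
        have hd := dist_torusIcc hab ht' hb'
        refine hd.trans ?_
        have hcast : D = (2:ℝ) ^ (i-1) := by rw [hD]; push_cast; ring
        rw [hℓ, show γ x + (((u x / 2 : ℤ):ℝ) + 1) / D - (γ x + ((u x / 2 : ℤ):ℝ) / D)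
            = 1 / D by field_simp; ring, hcast]
      have h1 : torusDist t b ≤ Real.sqrt m * ℓ := torusDist_le hℓpos.le hdist
      have h2 : torusDistSet t Ωᶜ ≤ Real.sqrt m * ℓ :=
        (torusDistSet_le t (Ω := Ωᶜ) hbΩ).trans h1
      refine lt_of_le_of_lt h2 ?_
      rw [hε, hK, hℓ]
      have h2i : (2:ℝ)^i = 2^(i-1) * 2 := by rw [← pow_succ]; congr 1; omega
      have hp : (0:ℝ) < (2:ℝ)^(i-1) := by positivity
      rw [h2i, lt_div_iff₀ (by positivity)]
      have hcomp : Real.sqrt m * (1 / 2^(i-1)) * (2^(i-1) * 2) = 2 * Real.sqrt m := by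
        field_simp
      rw [hcomp]
      nlinarith [hsqm]
    -- pairwise a.e. disjointness
    have hdisj : Set.Pairwise (F : Set (Set (Torus m))) (Function.onFun (AEDisjoint volume) id) := by
      intro Γ hΓ Γ' hΓ' hne
      rw [hF, Finset.mem_coe, Set.Finite.mem_toFinset] at hΓ hΓ'
      obtain ⟨⟨⟨u, rfl⟩, _⟩, _⟩ := hΓ
      obtain ⟨⟨⟨u', rfl⟩, _⟩, _⟩ := hΓ'
      have : ¬ ∀ x, ((2^i:ℕ):ℤ) ∣ (u x - u' x) := by
        intro hall
        exact hne (gridCube_mod γ hk1 u u' hall)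
      push_neg at this
      obtain ⟨i₀, hi₀⟩ := this
      exact gridCube_inter_null γ hk1 u u' i₀ hi₀
    have hnm : ∀ Γ ∈ F, NullMeasurableSet (id Γ) volume := by
      intro Γ hΓ
      rw [hF, Set.Finite.mem_toFinset] at hΓ
      obtain ⟨⟨⟨u, rfl⟩, _⟩, _⟩ := hΓ
      exact (measurableSet_gridCube γ _ u).nullMeasurableSet
    -- measure counting
    have hcount : (F.card : ℝ≥0∞) * ENNReal.ofReal ((1/K)^m) ≤ volume (innerShell Ω ε) := by
      calc (F.card : ℝ≥0∞) * ENNReal.ofReal ((1/K)^m)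
          = ∑ _Γ ∈ F, ENNReal.ofReal ((1/K)^m) := by
            rw [Finset.sum_const, nsmul_eq_mul]
        _ ≤ ∑ Γ ∈ F, volume Γ := by
            refine Finset.sum_le_sum fun Γ hΓ => ?_
            rw [hF, Set.Finite.mem_toFinset] at hΓ
            obtain ⟨⟨⟨u, rfl⟩, _⟩, _⟩ := hΓ
            have := volume_gridCube_ge γ (k := 2^i) hk1 u
            rwa [show (1/((2^i : ℕ):ℝ)) = 1/K by rw [← hkK]] at this
        _ = volume (⋃ Γ ∈ F, Γ) := (measure_biUnion_finset₀ hdisj hnm).symm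
        _ ≤ volume (innerShell Ω ε) := by
            refine measure_mono ?_
            refine Set.iUnion₂_subset fun Γ hΓ => ?_
            rw [hF, Set.Finite.mem_toFinset] at hΓ
            exact hshell Γ hΓ
    -- convert to reals
    have hfin' : volume (innerShell Ω ε) ≠ ⊤ := measure_ne_top _ _
    have hreal : (F.card : ℝ) * (1/K)^m ≤ tmeas (innerShell Ω ε) := by
      have := ENNReal.toReal_mono hfin' hcount
      rwa [ENNReal.toReal_mul, ENNReal.toReal_natCast, ENNReal.toReal_ofReal (by positivity)]
        at this
    have hWS' := (hWS ε hεpos).2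
    have hchain : (F.card : ℝ) * (1/K)^m ≤ C * ε := hreal.trans hWS'
    have hncard : (S.ncard : ℝ) = (F.card : ℝ) := by
      rw [hF, Set.ncard_eq_toFinset_card S hfin]
    rw [hncard]
    -- final arithmetic
    have hKm : K ^ m = K * 2 ^ (i * (m - 1)) := by
      rw [hK]
      have h1 : (m:ℕ) = 1 + n := by omega
      have h2 : i * (m - 1) = i * n := by simp [m]
      rw [h2, ← pow_mul, show ((2:ℝ)^i) * 2 ^ (i*n) = 2 ^ (i + i*n) by rw [pow_add],
        show i * m = i + i * n by show i * (n + 1) = i + i * n; ring]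
    have hKpow : (0:ℝ) < K ^ m := by positivity
    have hfc : (F.card : ℝ) ≤ C * ε * K ^ m := by
      have := mul_le_mul_of_nonneg_right hchain (le_of_lt hKpow)
      have hone : (1/K)^m * K^m = 1 := by
        rw [← mul_pow]; simp [one_div, inv_mul_cancel₀ hKpos.ne']
      calc (F.card : ℝ) = (F.card : ℝ) * ((1/K)^m * K^m) := by rw [hone, mul_one]
        _ = (F.card : ℝ) * (1/K)^m * K^m := by ring
        _ ≤ C * ε * K ^ m := this
    have hCε : C * ε * K ^ m = 4 * Real.sqrt m * C * 2 ^ (i * (m-1)) := by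
      rw [hKm, hε]
      field_simp
    rw [hCε] at hfc
    refine hfc.trans ?_
    have hC : C ≤ max C 1 := le_max_left _ _
    have h2pow : (0:ℝ) ≤ 2 ^ (i * (m-1)) := by positivity
    have hstep : 4 * Real.sqrt m * C * 2 ^ (i * (m-1)) ≤
        4 * Real.sqrt m * max C 1 * 2 ^ (i * (m-1)) := by
      refine mul_le_mul_of_nonneg_right ?_ h2pow
      exact mul_le_mul_of_nonneg_left hC (by positivity)
    nlinarith [hstep, mul_nonneg (show (0:ℝ) ≤ 2^m by positivity) h2pow]
end Main
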